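/- arXiv:2002.00242 — 3 statements merged into one kernel-verified Lean document; each statement's English description precedes it below -/
import Mathlib

section
/- Let (R,𝔪) be a Noetherian local ring of prime characteristic p > 0, let c ∈ 𝔪, and let W be an Artinian R-module equipped with a Frobenius action F : W → W, i.e., an additive map satisfying F(r•w) = r^p•F(w) for all r ∈ R and w ∈ W. If the map w ↦ c•F(w) is injective, then there exists an integer N ≥ 1 such that for every δ ∈ 𝔪^N the map w ↦ (c+δ)•F(w) is injective. -/
/-- Let `(R,𝔪)` be a Noetherian local ring of prime characteristic `p > 0`,
`c ∈ 𝔪`, and `W` an Artinian `R`-module with a Frobenius action `F : W → W`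
(an additive map with `F (r • w) = r ^ p • F w`).  If `w ↦ c • F w` is injective, then there
is an integer `N ≥ 1` such that `w ↦ (c + δ) • F w` is injective for every `δ ∈ 𝔪 ^ N`. -/
theorem injectivity_of_twisted_frobenius_is_stable
    (p : ℕ) (hp : p.Prime)
    (R : Type*) [CommRing R] [IsNoetherianRing R] [IsLocalRing R] [CharP R p]
    (c : R) (hc : c ∈ IsLocalRing.maximalIdeal R)
    (W : Type*) [AddCommGroup W] [Module R W] [IsArtinian R W]
    (F : W → W)
    (hFadd : ∀ a b : W, F (a + b) = F a + F b)
    (hFsmul : ∀ (r : R) (w : W), F (r • w) = r ^ p • F w)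
    (hinj : Function.Injective fun w => c • F w) :
    ∃ N : ℕ, 1 ≤ N ∧ ∀ δ ∈ IsLocalRing.maximalIdeal R ^ N,
      Function.Injective fun w => (c + δ) • F w := by
  classical
  set m := IsLocalRing.maximalIdeal R with hm
  -- the ideal generated by `p`-th powers of elements of `m`
  set J : Ideal R := Ideal.span ((fun r => r ^ p) '' (m : Set R)) with hJ
  have hrad : m ≤ J.radical := fun r hr => ⟨p, Ideal.subset_span ⟨r, hr, rfl⟩⟩
  obtain ⟨n, hn⟩ := Ideal.exists_pow_le_of_le_radical_of_fg hrad (IsNoetherian.noetherian m)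
  -- basic properties of `F`
  have hF0 : F 0 = 0 := by
    have h := hFadd 0 0
    rw [add_zero] at h
    exact left_eq_add.mp h
  have hFneg : ∀ a : W, F (-a) = -F a := by
    intro a
    have h := hFadd a (-a)
    rw [add_neg_cancel, hF0] at h
    exact (eq_neg_of_add_eq_zero_right h.symm)
  refine ⟨n + 1, Nat.le_add_left 1 n, ?_⟩
  intro δ hδ
  have hδJ : δ ∈ J := hn (Ideal.pow_le_pow_right (Nat.le_succ n) hδ)
  -- the key point: the twisted map kills only `0`
  have key : ∀ x : W, (c + δ) • F x = 0 → x = 0 := by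
    intro x hx
    by_contra hx0
    set C : Submodule R W := Submodule.span R {x} with hC
    -- the descending chain `m ^ k • C` stabilizes
    have hmono : ∀ {k l : ℕ}, k ≤ l → m ^ l • C ≤ m ^ k • C := fun {k l} hkl =>
      Submodule.smul_mono_left (Ideal.pow_le_pow_right hkl)
    obtain ⟨k, hk⟩ := IsArtinian.monotone_stabilizes
      (⟨fun k => OrderDual.toDual (m ^ k • C), fun k l hkl => hmono hkl⟩ :
        ℕ →o (Submodule R W)ᵒᵈ)
    have hstab : m ^ k • C = m ^ (k + 1) • C := hk (k + 1) (Nat.le_succ k)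
    -- Nakayama: `m ^ k • C = ⊥`
    have hfg : (m ^ k • C).FG := by
      rw [Submodule.smul_eq_map₂]
      exact Submodule.FG.map₂ _ (IsNoetherian.noetherian (m ^ k))
        (Submodule.fg_span_singleton x)
    have hsucc : ∀ j : ℕ, m ^ (j + 1) • C = m • (m ^ j • C) := by
      intro j
      rw [pow_succ', ← smul_eq_mul, Submodule.smul_assoc]
    have hle : m ^ k • C ≤ m • (m ^ k • C) := by
      rw [← hsucc k]; exact le_of_eq hstab
    have hbot : ∃ j : ℕ, m ^ j • C = ⊥ :=
      ⟨k, Submodule.eq_bot_of_le_smul_of_le_jacobson_bot m _ hfg hle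
        (IsLocalRing.maximalIdeal_le_jacobson ⊥)⟩
    -- take the least such power
    set k₀ := Nat.find hbot with hk₀
    have hk₀spec : m ^ k₀ • C = ⊥ := Nat.find_spec hbot
    have hk₀pos : k₀ ≠ 0 := by
      intro h0
      rw [h0, pow_zero, Ideal.one_eq_top, Submodule.top_smul] at hk₀spec
      exact hx0 (by
        have : x ∈ C := Submodule.mem_span_singleton_self x
        rw [hk₀spec] at this
        simpa using this)
    obtain ⟨j, hj⟩ : ∃ j, k₀ = j + 1 := ⟨k₀ - 1, (Nat.succ_pred_eq_of_pos
      (Nat.pos_of_ne_zero hk₀pos)).symm⟩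
    have hjne : m ^ j • C ≠ ⊥ := Nat.find_min hbot (by omega)
    obtain ⟨y, hyC, hy0⟩ := Submodule.ne_bot_iff _ |>.mp hjne
    -- `y` is a nonzero element killed by `m`
    have hmy : ∀ r ∈ m, r • y = 0 := by
      intro r hr
      have : r • y ∈ m • (m ^ j • C) := Submodule.smul_mem_smul hr hyC
      rw [← hsucc j, ← hj, hk₀spec] at this
      simpa using this
    -- `y` is in the kernel of the twisted map
    obtain ⟨a, ha⟩ := Submodule.mem_span_singleton.mp
      (Submodule.smul_le_right hyC : y ∈ C)
    have hy1 : (c + δ) • F y = 0 := by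
      rw [← ha, hFsmul, smul_comm, hx, smul_zero]
    -- `δ` kills `F y` since `δ ∈ J` and `m • y = 0`
    have hy2 : δ • F y = 0 := by
      refine Submodule.span_induction (p := fun t _ => t • F y = 0) ?_ ?_ ?_ ?_ hδJ
      · rintro t ⟨r, hr, rfl⟩
        show r ^ p • F y = 0
        rw [← hFsmul, hmy r hr, hF0]
      · exact zero_smul R (F y)
      · intro s t _ _ hs ht
        show (s + t) • F y = 0
        rw [add_smul, hs, ht, add_zero]
      · intro a t _ ht
        show (a • t) • F y = 0
        rw [smul_eq_mul, mul_smul, ht, smul_zero]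
    -- hence `c` kills `F y`, contradicting injectivity
    have hy3 : c • F y = 0 := by
      have := hy1
      rw [add_smul, hy2, add_zero] at this
      exact this
    have : y = 0 := by
      apply hinj
      show c • F y = c • F 0
      rw [hy3, hF0, smul_zero]
    exact hy0 this
  -- conclude injectivity from triviality of the kernel
  intro a b hab
  have hsub : (c + δ) • F (a - b) = 0 := by
    have h : F (a - b) = F a - F b := by
      rw [sub_eq_add_neg, hFadd, hFneg, ← sub_eq_add_neg]
    rw [h, smul_sub, show (c + δ) • F a = (c + δ) • F b from hab, sub_self]
  have := key (a - b) hsub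
  exact sub_eq_zero.mp this
end

section
/- Let (R,𝔪) be a Noetherian local ring, let x ∈ 𝔪, and let W be an Artinian R-module such that the quotient module W/xW has finite length. Then there exists an integer N ≥ 1 such that x•W = (x+δ)•W (as R-submodules of W) for all δ ∈ 𝔪^N. -/
open Submodule

section Aux

variable {R : Type*} [CommRing R] {W : Type*} [AddCommGroup W] [Module R W]

/-- A nonzero submodule which is not the sum of two proper submodules. -/
private def SumIrred (U : Submodule R W) : Prop :=
  U ≠ ⊥ ∧ ∀ V₁ V₂ : Submodule R W, V₁ ⊔ V₂ = U → V₁ = U ∨ V₂ = U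

private lemma map_lsmul_le (a : R) (V : Submodule R W) :
    Submodule.map (LinearMap.lsmul R W a) V ≤ V := by
  rintro _ ⟨v, hv, rfl⟩
  exact V.smul_mem a hv

private lemma exists_sumIrred_decomp [IsArtinian R W] (X : Submodule R W) :
    ∃ s : Finset (Submodule R W), (∀ U ∈ s, SumIrred U) ∧ s.sup id = X := by
  classical
  induction X using WellFoundedLT.induction with
  | _ X IH =>
    by_cases hbot : X = ⊥
    · exact ⟨∅, by simp, by simp [hbot]⟩
    by_cases hirr : ∀ V₁ V₂ : Submodule R W, V₁ ⊔ V₂ = X → V₁ = X ∨ V₂ = X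
    · refine ⟨{X}, ?_, by simp⟩
      intro U hU
      rw [Finset.mem_singleton] at hU
      subst hU
      exact ⟨hbot, hirr⟩
    · push_neg at hirr
      obtain ⟨V₁, V₂, hsup, h1, h2⟩ := hirr
      have l1 : V₁ < X := lt_of_le_of_ne (hsup ▸ le_sup_left) h1
      have l2 : V₂ < X := lt_of_le_of_ne (hsup ▸ le_sup_right) h2
      obtain ⟨s₁, hs₁, e₁⟩ := IH V₁ l1
      obtain ⟨s₂, hs₂, e₂⟩ := IH V₂ l2
      refine ⟨s₁ ∪ s₂, ?_, ?_⟩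
      · intro U hU
        rcases Finset.mem_union.mp hU with h | h
        · exact hs₁ U h
        · exact hs₂ U h
      · rw [Finset.sup_union, e₁, e₂, hsup]

private lemma lsmul_pow_succ (r : R) (n : ℕ) : LinearMap.lsmul R W (r ^ (n + 1))
    = (LinearMap.lsmul R W r).comp (LinearMap.lsmul R W (r ^ n)) := by
  ext w
  simp [pow_succ, mul_smul, mul_comm r]

/-- Fitting-style dichotomy: on a sum-irreducible submodule of an Artinian module, every
scalar acts either surjectively or nilpotently. -/
private lemma sumIrred_dichotomy [IsArtinian R W] {U : Submodule R W} (hU : SumIrred U) (r : R) :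
    Submodule.map (LinearMap.lsmul R W r) U = U ∨ ∃ n, ∀ u ∈ U, r ^ n • u = 0 := by
  set c : ℕ → Submodule R W := fun n => U.map (LinearMap.lsmul R W (r ^ n)) with hc
  have hsucc : ∀ n : ℕ, c (n + 1) = (c n).map (LinearMap.lsmul R W r) := by
    intro n
    rw [hc]
    simp only
    rw [lsmul_pow_succ r n, Submodule.map_comp]
  obtain ⟨M', ⟨s, rfl⟩, hmin⟩ :=
    IsArtinian.set_has_minimal (Set.range c) ⟨c 0, ⟨0, rfl⟩⟩
  have hstab : c (s + 1) = c s := by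
    have hle : c (s + 1) ≤ c s := by
      rw [hsucc s]; exact map_lsmul_le r (c s)
    rcases eq_or_lt_of_le hle with h | h
    · exact h
    · exact absurd h (hmin _ ⟨s + 1, rfl⟩)
  have hall : ∀ m : ℕ, c (s + m) = c s := by
    intro m
    induction m with
    | zero => rfl
    | succ m ih => rw [← Nat.add_assoc, hsucc (s + m), ih, ← hsucc s, hstab]
  by_cases hcs : c s = U
  · left
    have : c s = (c s).map (LinearMap.lsmul R W r) := by
      conv_lhs => rw [← hstab, hsucc s]
    rw [hcs] at this
    exact this.symm
  · right
    refine ⟨s, fun u hu => ?_⟩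
    have key : (LinearMap.ker (LinearMap.lsmul R W (r ^ s)) ⊓ U) ⊔ c s = U := by
      apply le_antisymm
      · exact sup_le inf_le_right (map_lsmul_le _ U)
      · intro w hw
        have h1 : r ^ s • w ∈ c (s + s) := by
          rw [hall s]
          exact ⟨w, hw, rfl⟩
        obtain ⟨v, hv, hveq⟩ := h1
        have hker : w - r ^ s • v ∈ LinearMap.ker (LinearMap.lsmul R W (r ^ s)) := by
          rw [LinearMap.mem_ker, LinearMap.lsmul_apply, smul_sub, smul_smul, ← pow_add]
          simp only [LinearMap.lsmul_apply] at hveq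
          rw [hveq, sub_self]
        exact Submodule.mem_sup.mpr ⟨w - r ^ s • v, ⟨hker, U.sub_mem hw (U.smul_mem _ hv)⟩,
          r ^ s • v, ⟨v, hv, rfl⟩, by abel⟩
    rcases hU.2 _ _ key with h | h
    · rw [← h] at hu
      simpa using hu.1
    · exact absurd h hcs

/-- If a scalar acts surjectively on a submodule, so do all of its powers. -/
private lemma map_lsmul_pow_eq {U : Submodule R W} {r : R}
    (h : Submodule.map (LinearMap.lsmul R W r) U = U) (m : ℕ) :
    Submodule.map (LinearMap.lsmul R W (r ^ m)) U = U := by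
  induction m with
  | zero =>
    apply le_antisymm (map_lsmul_le _ U)
    intro u hu
    exact ⟨u, hu, by simp⟩
  | succ m ih =>
    rw [lsmul_pow_succ r m, Submodule.map_comp, ih, h]

end Aux

private lemma krull_avoid {R : Type*} [CommRing R] [IsNoetherianRing R] [IsLocalRing R]
    {p : Ideal R} {x : R} (hx : x ∉ p) :
    ∃ N : ℕ, ∀ δ ∈ IsLocalRing.maximalIdeal R ^ N, x + δ ∉ p := by
  by_contra hcon
  push_neg at hcon
  have hbot : (⨅ i : ℕ, (IsLocalRing.maximalIdeal R) ^ i • ⊤ : Submodule R (R ⧸ p)) = ⊥ :=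
    Ideal.iInf_pow_smul_eq_bot_of_isLocalRing (I := IsLocalRing.maximalIdeal R)
      (M := R ⧸ p) ((IsLocalRing.maximalIdeal.isMaximal R).ne_top)
  have hmem : ∀ N : ℕ, p.mkQ x ∈ ((IsLocalRing.maximalIdeal R) ^ N • ⊤ : Submodule R (R ⧸ p)) := by
    intro N
    obtain ⟨δ, hδ, hxδ⟩ := hcon N
    have h0 : p.mkQ (x + δ) = 0 := by
      rw [Submodule.mkQ_apply, Submodule.Quotient.mk_eq_zero]
      exact hxδ
    have : p.mkQ x = -(δ • p.mkQ 1) := by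
      have hadd := map_add p.mkQ x δ
      rw [h0] at hadd
      have h1 : p.mkQ δ = δ • p.mkQ 1 := by
        rw [← map_smul, smul_eq_mul, mul_one]
      linear_combination (norm := module) hadd.symm - h1
    rw [this]
    exact neg_mem (Submodule.smul_mem_smul hδ trivial)
  have : p.mkQ x ∈ (⊥ : Submodule R (R ⧸ p)) := by
    rw [← hbot]
    exact Submodule.mem_iInf _ |>.mpr hmem
  rw [Submodule.mem_bot, Submodule.mkQ_apply, Submodule.Quotient.mk_eq_zero] at this
  exact hx this

private lemma nak_pow_le {R : Type*} [CommRing R] [IsNoetherianRing R] [IsLocalRing R]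
    {W : Type*} [AddCommGroup W] [Module R W] (x : R)
    (hfl : IsFiniteLength R (W ⧸ LinearMap.range (LinearMap.lsmul R W x))) :
    ∃ k : ℕ, IsLocalRing.maximalIdeal R ^ k • (⊤ : Submodule R W)
      ≤ LinearMap.range (LinearMap.lsmul R W x) := by
  obtain ⟨hNoe, hArt⟩ := isFiniteLength_iff_isNoetherian_isArtinian.mp hfl
  set P := LinearMap.range (LinearMap.lsmul R W x) with hP
  set 𝔪 := IsLocalRing.maximalIdeal R with h𝔪
  obtain ⟨M', ⟨k, rfl⟩, hmin⟩ := IsArtinian.set_has_minimal (R := R) (M := W ⧸ P)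
      (Set.range fun n : ℕ => 𝔪 ^ n • (⊤ : Submodule R (W ⧸ P))) ⟨_, ⟨0, rfl⟩⟩
  have heq : 𝔪 ^ (k + 1) • (⊤ : Submodule R (W ⧸ P)) = 𝔪 ^ k • ⊤ := by
    have hle : 𝔪 ^ (k + 1) • (⊤ : Submodule R (W ⧸ P)) ≤ 𝔪 ^ k • ⊤ := by
      rw [pow_succ, ← Ideal.smul_eq_mul, Submodule.smul_assoc]
      exact smul_mono_right (𝔪 ^ k) Submodule.smul_le_right
    rcases eq_or_lt_of_le hle with h | h
    · exact h
    · exact absurd h (hmin _ ⟨k + 1, rfl⟩)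
  have hQ : 𝔪 ^ k • (⊤ : Submodule R (W ⧸ P)) = ⊥ := by
    refine Submodule.eq_bot_of_le_smul_of_le_jacobson_bot 𝔪 _ (IsNoetherian.noetherian _) ?_
      (IsLocalRing.maximalIdeal_le_jacobson ⊥)
    have h2 : 𝔪 • 𝔪 ^ k • (⊤ : Submodule R (W ⧸ P)) = 𝔪 ^ (k + 1) • ⊤ := by
      rw [pow_succ, mul_comm, ← Ideal.smul_eq_mul, Submodule.smul_assoc]
    rw [h2, heq]
  refine ⟨k, ?_⟩
  rw [Submodule.smul_le]
  intro r hr w _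
  have hmem : P.mkQ (r • w) ∈ 𝔪 ^ k • (⊤ : Submodule R (W ⧸ P)) := by
    rw [map_smul]
    exact Submodule.smul_mem_smul hr trivial
  rw [hQ, Submodule.mem_bot, Submodule.mkQ_apply, Submodule.Quotient.mk_eq_zero] at hmem
  exact hmem

/-- Let `(R,𝔪)` be a Noetherian local ring, `x ∈ 𝔪`, and `W` an Artinian
`R`-module such that `W/xW` has finite length.  Then there is an integer `N ≥ 1` such that
`x • W = (x + δ) • W` (as submodules of `W`, realized as ranges of the scalar multiplication
maps) for every `δ ∈ 𝔪 ^ N`. -/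
theorem smul_submodule_stable_of_finiteLength_quotient
    (R : Type*) [CommRing R] [IsNoetherianRing R] [IsLocalRing R]
    (x : R) (hx : x ∈ IsLocalRing.maximalIdeal R)
    (W : Type*) [AddCommGroup W] [Module R W] [IsArtinian R W]
    (hfl : IsFiniteLength R (W ⧸ LinearMap.range (LinearMap.lsmul R W x))) :
    ∃ N : ℕ, 1 ≤ N ∧ ∀ δ ∈ IsLocalRing.maximalIdeal R ^ N,
      LinearMap.range (LinearMap.lsmul R W x)
        = LinearMap.range (LinearMap.lsmul R W (x + δ)) := by
  classical
  set 𝔪 := IsLocalRing.maximalIdeal R with h𝔪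
  obtain ⟨k, hk⟩ := nak_pow_le x hfl
  obtain ⟨s, hs, hsup⟩ := exists_sumIrred_decomp (⊤ : Submodule R W)
  set Sg := s.filter (fun U => Submodule.map (LinearMap.lsmul R W x) U = U) with hSg
  set V := Sg.sup id with hV
  -- nilpotency exponents for the bad components
  have hbadex : ∀ U ∈ s, U ∉ Sg → ∃ n, ∀ u ∈ U, x ^ n • u = 0 := by
    intro U hU hUb
    rcases sumIrred_dichotomy (hs U hU) x with h | h
    · exact absurd (show U ∈ Sg from Finset.mem_filter.mpr ⟨hU, h⟩) hUb
    · exact h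
  choose! nb hnb using hbadex
  set t := s.sup nb with ht
  have hbadt : ∀ U ∈ s, U ∉ Sg → ∀ u ∈ U, x ^ t • u = 0 := by
    intro U hU hUb u hu
    have h2 : nb U ≤ t := Finset.le_sup hU
    calc x ^ t • u = x ^ (t - nb U) • x ^ nb U • u := by
          rw [← mul_smul, ← pow_add, Nat.sub_add_cancel h2]
      _ = 0 := by rw [hnb U hU hUb u hu, smul_zero]
  -- x is not in the radical of the annihilator of a good component
  have hxrad : ∀ U ∈ Sg, x ∉ (Submodule.annihilator U).radical := by
    intro U hU hmem
    obtain ⟨n, hn⟩ := Ideal.mem_radical_iff.mp hmem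
    have hgood : Submodule.map (LinearMap.lsmul R W x) U = U := (Finset.mem_filter.mp hU).2
    have hbotU : U = ⊥ := by
      rw [← map_lsmul_pow_eq hgood n]
      rw [eq_bot_iff]
      rintro _ ⟨u, hu, rfl⟩
      simp only [LinearMap.lsmul_apply, Submodule.mem_bot]
      exact Submodule.mem_annihilator.mp hn u hu
    exact (hs U (Finset.mem_filter.mp hU).1).1 hbotU
  -- Krull avoidance numbers for the good components
  have hKex : ∀ U ∈ Sg, ∃ N, ∀ δ ∈ 𝔪 ^ N, x + δ ∉ (Submodule.annihilator U).radical :=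
    fun U hU => krull_avoid (hxrad U hU)
  choose! nK hnK using hKex
  set NK := Sg.sup nK with hNK
  set N := NK + t * k + 1 with hN
  -- powers of 𝔪 land in ranges of powers of x
  have haux : ∀ j : ℕ, 𝔪 ^ (j * k) • (⊤ : Submodule R W)
      ≤ LinearMap.range (LinearMap.lsmul R W (x ^ j)) := by
    intro j
    induction j with
    | zero =>
      intro w _
      exact ⟨w, by simp⟩
    | succ j ih =>
      have h1 : 𝔪 ^ ((j + 1) * k) • (⊤ : Submodule R W) = 𝔪 ^ k • 𝔪 ^ (j * k) • ⊤ := by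
        rw [Nat.succ_mul, Nat.add_comm, pow_add, ← Ideal.smul_eq_mul, Submodule.smul_assoc]
      rw [h1]
      refine le_trans (smul_mono_right _ ih) ?_
      rw [Submodule.smul_le]
      rintro r hr _ ⟨w, rfl⟩
      obtain ⟨w', hw'⟩ := hk (Submodule.smul_mem_smul hr (Submodule.mem_top (x := w)))
      refine ⟨w', ?_⟩
      simp only [LinearMap.lsmul_apply] at hw' ⊢
      rw [pow_succ, mul_smul, hw', smul_comm]
  -- the stable core V absorbs 𝔪^(t*k)
  have hrangeV : LinearMap.range (LinearMap.lsmul R W (x ^ t)) ≤ V := by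
    have hcom : (⊤ : Submodule R W) ≤ Submodule.comap (LinearMap.lsmul R W (x ^ t)) V := by
      rw [← hsup]
      apply Finset.sup_le
      intro U hU
      by_cases hUg : U ∈ Sg
      · intro u hu
        simp only [Submodule.mem_comap, LinearMap.lsmul_apply]
        exact Finset.le_sup (f := id) hUg (U.smul_mem _ hu)
      · intro u hu
        simp only [Submodule.mem_comap, LinearMap.lsmul_apply]
        rw [hbadt U hU hUg u hu]
        exact V.zero_mem
    rintro _ ⟨w, rfl⟩
    exact hcom trivial
  have hKV : 𝔪 ^ (t * k) • (⊤ : Submodule R W) ≤ V := le_trans (haux t) hrangeV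
  have hVx : V ≤ LinearMap.range (LinearMap.lsmul R W x) := by
    apply Finset.sup_le
    intro U hU u hu
    have hgood : Submodule.map (LinearMap.lsmul R W x) U = U := (Finset.mem_filter.mp hU).2
    rw [← hgood] at hu
    obtain ⟨v, hv, rfl⟩ := hu
    exact ⟨v, rfl⟩
  refine ⟨N, by omega, ?_⟩
  intro δ hδ
  -- every good component is also good for x + δ
  have hyV : V ≤ LinearMap.range (LinearMap.lsmul R W (x + δ)) := by
    apply Finset.sup_le
    intro U hU u hu
    have hygood : Submodule.map (LinearMap.lsmul R W (x + δ)) U = U := by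
      rcases sumIrred_dichotomy (hs U (Finset.mem_filter.mp hU).1) (x + δ) with h | h
      · exact h
      · obtain ⟨n, hn⟩ := h
        exfalso
        refine hnK U hU δ ?_ ?_
        · refine Ideal.pow_le_pow_right ?_ hδ
          have : nK U ≤ NK := Finset.le_sup hU
          omega
        · exact Ideal.mem_radical_iff.mpr ⟨n, Submodule.mem_annihilator.mpr hn⟩
    rw [← hygood] at hu
    obtain ⟨v, hv, rfl⟩ := hu
    exact ⟨v, rfl⟩
  have hδV : ∀ w : W, δ • w ∈ V := by
    intro w
    refine hKV (Submodule.smul_mono_left ?_ (Submodule.smul_mem_smul hδ trivial))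
    refine Ideal.pow_le_pow_right ?_
    omega
  apply le_antisymm
  · rintro _ ⟨w, rfl⟩
    have hxw : (LinearMap.lsmul R W x) w = (x + δ) • w - δ • w := by
      simp only [LinearMap.lsmul_apply, add_smul]
      abel
    rw [hxw]
    exact Submodule.sub_mem _ ⟨w, rfl⟩ (hyV (hδV w))
  · rintro _ ⟨w, rfl⟩
    have hyw : (LinearMap.lsmul R W (x + δ)) w = x • w + δ • w := by
      simp only [LinearMap.lsmul_apply, add_smul]
    rw [hyw]
    exact Submodule.add_mem _ ⟨w, rfl⟩ (hVx (hδV w))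
end

section
/- Let (R,𝔪) be an F-finite Noetherian local ring of prime characteristic p > 0 and let x ∈ 𝔪 be a non-zerodivisor on R. Assume that R is compatibly F-pure along the ideal (x). Then there exists an integer N ≥ 1 such that for every δ ∈ 𝔪^N, R is compatibly F-pure along the ideal (x+δ); in particular, for every δ ∈ 𝔪^N the quotient ring R/(x+δ) admits a Cartier map ψ with ψ(1) = 1, i.e., R/(x+δ) is F-pure. -/
open IsLocalRing

/-- A `p^{-e}`-linear map on `R`: an additive map `φ : R → R` with
`φ (r^{p^e} * s) = r * φ s` for all `r, s`. -/
def IsPeLinearMap (p e : ℕ) {R : Type*} [CommRing R] (φ : R → R) : Prop :=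
  (∀ a b : R, φ (a + b) = φ a + φ b) ∧ ∀ r s : R, φ (r ^ p ^ e * s) = r * φ s

/-- `R` is F-finite: the Frobenius endomorphism `r ↦ r ^ p` is a finite ring map. -/
def IsFFinite (p : ℕ) (R : Type*) [CommRing R] : Prop :=
  ∃ f : R →+* R, (∀ r, f r = r ^ p) ∧ f.Finite

/-- `R` is compatibly F-pure along the ideal `a`: there is a Cartier map
(a `p^{-e}`-linear map for some `e ≥ 1`) `φ : R → R` with `φ 1 = 1` and `φ a ⊆ a`. -/
def CompatiblyFPureAlong (p : ℕ) {R : Type*} [CommRing R] (a : Ideal R) : Prop :=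
  ∃ (e : ℕ) (φ : R → R), 1 ≤ e ∧ IsPeLinearMap p e φ ∧ φ 1 = 1 ∧ ∀ y ∈ a, φ y ∈ a

/-- `A` admits a Cartier map `ψ` with `ψ 1 = 1` (for F-finite rings this is F-purity). -/
def AdmitsCartierSplitting (p : ℕ) (A : Type*) [CommRing A] : Prop :=
  ∃ (e : ℕ) (ψ : A → A), 1 ≤ e ∧ IsPeLinearMap p e ψ ∧ ψ 1 = 1


lemma span_list_pow_le {R : Type*} [CommRing R] (q : ℕ) (l : List R) :
    Ideal.span {a | a ∈ l} ^ (l.length * q + 1) ≤ Ideal.span ((fun a => a ^ q) '' {a | a ∈ l}) := by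
  induction l with
  | nil =>
      simp only [List.not_mem_nil]
      simp [Ideal.span_empty]
  | cons a l ih =>
      have hset : {x | x ∈ a :: l} = insert a {x | x ∈ l} := by
        ext y; simp [List.mem_cons]
      rw [hset, Ideal.span_insert]
      have hlen : (a :: l).length * q + 1 = q + (l.length * q + 1) := by
        simp [List.length_cons, add_mul, one_mul]; ring
      rw [hlen]
      refine le_trans Ideal.sup_pow_add_le_pow_sup_pow (sup_le ?_ ?_)
      · rw [Ideal.span_singleton_pow]
        refine Ideal.span_le.2 ?_
        intro y hy
        simp only [Set.mem_singleton_iff] at hy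
        subst hy
        exact Ideal.subset_span ⟨a, by simp, rfl⟩
      · refine le_trans ih (Ideal.span_mono ?_)
        intro y hy
        obtain ⟨b, hb, rfl⟩ := hy
        exact ⟨b, by simp [hb], rfl⟩

/-- Let `(R,𝔪)` be an F-finite Noetherian local ring of prime
characteristic `p > 0` and `x ∈ 𝔪` a non-zerodivisor such that `R` is compatibly F-pure
along `(x)`.  Then there is an `N ≥ 1` such that for all `δ ∈ 𝔪 ^ N`, `R` is compatibly
F-pure along `(x + δ)`; in particular `R/(x+δ)` admits a Cartier map `ψ` with `ψ 1 = 1`,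
i.e. `R/(x+δ)` is F-pure. -/
theorem compatiblyFPure_is_stable
    (p : ℕ) (hp : p.Prime)
    (R : Type*) [CommRing R] [IsNoetherianRing R] [IsLocalRing R] [CharP R p]
    (hff : IsFFinite p R)
    (x : R) (hx : x ∈ maximalIdeal R) (hreg : x ∈ nonZeroDivisors R)
    (hcomp : CompatiblyFPureAlong p (Ideal.span {x})) :
    ∃ N : ℕ, 1 ≤ N ∧ ∀ δ ∈ maximalIdeal R ^ N,
      CompatiblyFPureAlong p (Ideal.span {x + δ}) ∧
      AdmitsCartierSplitting p (R ⧸ Ideal.span {x + δ}) := by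
  classical
  obtain ⟨e, φ, he, ⟨hadd, hlin⟩, hone, hcompat⟩ := hcomp
  set q := p ^ e with hqdef
  have hq1 : 1 ≤ q := Nat.one_le_pow _ _ hp.pos
  -- cancellation by x
  have cancel : ∀ a b : R, x * a = x * b → a = b := fun a b h =>
    (mul_cancel_left_mem_nonZeroDivisors hreg).1 h
  -- define α with φ (x * s) = x * α s
  have hxdvd : ∀ s : R, ∃ t, φ (x * s) = x * t := by
    intro s
    have hmem : x * s ∈ Ideal.span {x} := Ideal.mem_span_singleton.2 ⟨s, rfl⟩
    exact Ideal.mem_span_singleton.1 (hcompat _ hmem)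
  choose α hα using hxdvd
  have αadd : ∀ a b : R, α (a + b) = α a + α b := by
    intro a b
    apply cancel
    calc x * α (a + b) = φ (x * (a + b)) := (hα _).symm
      _ = φ (x * a + x * b) := by rw [mul_add]
      _ = φ (x * a) + φ (x * b) := hadd _ _
      _ = x * α a + x * α b := by rw [hα, hα]
      _ = x * (α a + α b) := by ring
  have α0 : α 0 = 0 := by
    have := αadd 0 0
    rw [add_zero] at this
    exact left_eq_add.mp this
  have αlin : ∀ r s : R, α (r ^ q * s) = r * α s := by
    intro r s
    apply cancel
    have h1 : x * (r ^ q * s) = r ^ q * (x * s) := by ring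
    rw [← hα, h1, hlin, hα]
    ring
  have αx : α (x ^ (q - 1)) = 1 := by
    apply cancel
    have h1 : x * x ^ (q - 1) = x ^ q * 1 := by
      rw [mul_one, ← pow_succ']
      congr 1
      omega
    rw [← hα, h1, hlin, hone]
  -- generators of the maximal ideal
  obtain ⟨T, hT⟩ : (maximalIdeal R).FG := IsNoetherian.noetherian _
  set l := T.toList with hl
  have hTl : {a : R | a ∈ l} = (↑T : Set R) := by
    ext y; simp [hl, Finset.mem_toList]
  set N := l.length * q + 1 with hN
  have hNpow : maximalIdeal R ^ N ≤ Ideal.span ((fun a => a ^ q) '' (↑T : Set R)) := by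
    rw [← hT, ← hTl]
    exact span_list_pow_le q l
  -- α sends (q-power span) * R into the maximal ideal
  have key : ∀ z ∈ Ideal.span ((fun a => a ^ q) '' (↑T : Set R)),
      ∀ r : R, α (z * r) ∈ maximalIdeal R := by
    intro z hz
    induction hz using Submodule.span_induction with
    | mem w hw =>
        obtain ⟨a, ha, rfl⟩ := hw
        intro r
        rw [αlin]
        have haM : a ∈ maximalIdeal R := by
          rw [← hT]; exact Ideal.subset_span ha
        exact Ideal.mul_mem_right _ _ haM
    | zero =>
        intro r
        rw [zero_mul, α0]
        exact Ideal.zero_mem _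
    | add w₁ w₂ h₁ h₂ ih₁ ih₂ =>
        intro r
        rw [add_mul, αadd]
        exact Ideal.add_mem _ (ih₁ r) (ih₂ r)
    | smul t w hw ihw =>
        intro r
        have h1 : t • w * r = w * (t * r) := by
          rw [smul_eq_mul]; ring
        rw [h1]
        exact ihw (t * r)
  refine ⟨N, by omega, ?_⟩
  intro δ hδ
  have hδ' : δ ∈ Ideal.span ((fun a => a ^ q) '' (↑T : Set R)) := hNpow hδ
  -- α ((x+δ)^(q-1)) = 1 + (element of the maximal ideal)
  obtain ⟨c, hc⟩ : δ ∣ (x + δ) ^ (q - 1) - x ^ (q - 1) := by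
    have := sub_dvd_pow_sub_pow (x + δ) x (q - 1)
    simpa using this
  have hu : α ((x + δ) ^ (q - 1)) = 1 + α (δ * c) := by
    have h1 : (x + δ) ^ (q - 1) = x ^ (q - 1) + δ * c := by linear_combination hc
    rw [h1, αadd, αx]
  have hmm : α (δ * c) ∈ maximalIdeal R := key δ hδ' c
  have hu_unit : IsUnit (α ((x + δ) ^ (q - 1))) := by
    by_contra h
    have hmem : α ((x + δ) ^ (q - 1)) ∈ maximalIdeal R := h
    have h1 : (1 : R) ∈ maximalIdeal R := by
      have : (1 : R) = α ((x + δ) ^ (q - 1)) - α (δ * c) := by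
        rw [hu]; ring
      rw [this]
      exact Ideal.sub_mem _ hmem hmm
    exact (IsLocalRing.maximalIdeal.isMaximal R).ne_top (Ideal.eq_top_of_isUnit_mem _ h1 isUnit_one)
  obtain ⟨v, hv⟩ := hu_unit
  -- the perturbed compatible splitting
  set φ' : R → R := fun s => (↑v⁻¹ : R) * α ((x + δ) ^ (q - 1) * s) with hφ'
  have φ'add : ∀ a b : R, φ' (a + b) = φ' a + φ' b := by
    intro a b
    simp only [hφ', mul_add, αadd]
  have φ'lin : ∀ r s : R, φ' (r ^ q * s) = r * φ' s := by
    intro r s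
    simp only [hφ']
    have h1 : (x + δ) ^ (q - 1) * (r ^ q * s) = r ^ q * ((x + δ) ^ (q - 1) * s) := by ring
    rw [h1, αlin]
    ring
  have φ'one : φ' 1 = 1 := by
    simp only [hφ', mul_one]
    rw [← hv]
    exact Units.inv_mul v
  have φ'comp : ∀ y ∈ Ideal.span {x + δ}, φ' y ∈ Ideal.span {x + δ} := by
    intro y hy
    obtain ⟨t, rfl⟩ := Ideal.mem_span_singleton.1 hy
    simp only [hφ']
    have h1 : (x + δ) ^ (q - 1) * ((x + δ) * t) = (x + δ) ^ q * t := by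
      rw [← mul_assoc, ← pow_succ]
      congr 2
      omega
    rw [h1, αlin]
    exact Ideal.mem_span_singleton.2 ⟨(↑v⁻¹ : R) * α t, by ring⟩
  have hCFP : CompatiblyFPureAlong p (Ideal.span {x + δ}) :=
    ⟨e, φ', he, ⟨φ'add, φ'lin⟩, φ'one, φ'comp⟩
  refine ⟨hCFP, ?_⟩
  -- descend to the quotient
  set I := Ideal.span {x + δ} with hI
  set mk : R →+* R ⧸ I := Ideal.Quotient.mk I with hmk
  have hcong : ∀ s t : R, mk s = mk t → mk (φ' s) = mk (φ' t) := by
    intro s t h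
    have hst : s - t ∈ I := (Ideal.Quotient.eq).1 h
    have h1 : φ' s = φ' t + φ' (s - t) := by
      rw [← φ'add]; congr 1; ring
    rw [h1, map_add]
    have h2 : mk (φ' (s - t)) = 0 := (Ideal.Quotient.eq_zero_iff_mem).2 (φ'comp _ hst)
    rw [h2, add_zero]
  have hsurj : Function.Surjective mk := Ideal.Quotient.mk_surjective
  set rep : R ⧸ I → R := fun a => (hsurj a).choose with hrepdef
  have hrep : ∀ a, mk (rep a) = a := fun a => (hsurj a).choose_spec
  set ψ : R ⧸ I → R ⧸ I := fun a => mk (φ' (rep a)) with hψ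
  have hkey : ∀ s : R, ψ (mk s) = mk (φ' s) := by
    intro s
    exact hcong _ _ (hrep (mk s))
  refine ⟨e, ψ, he, ⟨?_, ?_⟩, ?_⟩
  · intro a b
    rw [← hrep a, ← hrep b, ← map_add, hkey, hkey, hkey, φ'add, map_add]
  · intro r s
    rw [← hrep r, ← hrep s, ← map_pow, ← map_mul, hkey, hkey, φ'lin, map_mul]
  · rw [← map_one mk, hkey, φ'one]
end
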